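/- For every real number t ∈ [−1,1] and every real α with 0 < α ≤ 1, the expression e^{−αt/2}·t·(2+t) − e^{αt/2}·t·(2−t) is nonnegative. -/
import Mathlib

lemma key_exp_ineq (x : ℝ) (hx0 : 0 ≤ x) (hx1 : x ≤ 1) :
    (2 - x) * Real.exp x ≤ 2 + x := by
  have h := Real.exp_bound' hx0 hx1 (n := 4) (by norm_num)
  have hsum : (∑ m ∈ Finset.range 4, x ^ m / m.factorial) = 1 + x + x^2/2 + x^3/6 := by
    simp [Finset.sum_range_succ, Nat.factorial]
  rw [hsum] at h
  norm_num [Nat.factorial] at h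
  have h2 : (2 - x) * Real.exp x ≤ (2 - x) * (1 + x + x^2/2 + x^3/6 + x^4 * 5 / 96) :=
    mul_le_mul_of_nonneg_left h (by linarith)
  nlinarith [pow_nonneg hx0 3, pow_nonneg hx0 4, pow_nonneg hx0 5]

theorem ell1_expr_nonneg (t α : ℝ) (ht : t ∈ Set.Icc (-1 : ℝ) 1) (hα0 : 0 < α) (hα : α ≤ 1) :
    0 ≤ Real.exp (-(α * t) / 2) * t * (2 + t) - Real.exp (α * t / 2) * t * (2 - t) := by
  obtain ⟨ht1, ht2⟩ := ht
  have hEpos := Real.exp_pos (α * t / 2)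
  have hEpos' := Real.exp_pos (-(α * t) / 2)
  have hE : Real.exp (-(α * t) / 2) * Real.exp (α * t / 2) = 1 := by
    rw [← Real.exp_add, show -(α * t) / 2 + α * t / 2 = 0 by ring, Real.exp_zero]
  rcases le_or_gt 0 t with h | h
  · have hx0 : 0 ≤ α * t := mul_nonneg hα0.le h
    have hxt : α * t ≤ t := by nlinarith
    have hx1 : α * t ≤ 1 := hxt.trans ht2
    have key := key_exp_ineq (α * t) hx0 hx1
    have hsq : Real.exp (α * t / 2) ^ 2 = Real.exp (α * t) := by
      rw [sq, ← Real.exp_add, show α * t / 2 + α * t / 2 = α * t by ring]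
    have h1 : 1 ≤ Real.exp (α * t) := Real.one_le_exp hx0
    have key2 : (2 - t) * Real.exp (α * t) ≤ 2 + t := by
      have h2 : (t - α * t) * 1 ≤ (t - α * t) * Real.exp (α * t) :=
        mul_le_mul_of_nonneg_left h1 (by linarith)
      nlinarith
    rw [← hsq] at key2
    -- multiply by E₋ ≥ 0 and use hE
    have key3 : (2 - t) * Real.exp (α * t / 2) ≤ (2 + t) * Real.exp (-(α * t) / 2) := by
      have h3 := mul_le_mul_of_nonneg_right key2 hEpos'.le
      nlinarith [hEpos, hEpos']
    nlinarith [mul_le_mul_of_nonneg_left key3 h]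
  · have hx0 : 0 ≤ -(α * t) := by nlinarith
    have hxt : -(α * t) ≤ -t := by nlinarith
    have hx1 : -(α * t) ≤ 1 := by linarith
    have key := key_exp_ineq (-(α * t)) hx0 hx1
    have hsq : Real.exp (-(α * t) / 2) ^ 2 = Real.exp (-(α * t)) := by
      rw [sq, ← Real.exp_add, show -(α * t) / 2 + -(α * t) / 2 = -(α * t) by ring]
    have key2 : (2 + t) * Real.exp (-(α * t)) ≤ 2 - t := by
      have h2 : (2 + t) * Real.exp (-(α * t)) ≤ (2 - -(α * t)) * Real.exp (-(α * t)) :=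
        mul_le_mul_of_nonneg_right (by linarith) (Real.exp_pos _).le
      linarith
    rw [← hsq] at key2
    have key3 : (2 + t) * Real.exp (-(α * t) / 2) ≤ (2 - t) * Real.exp (α * t / 2) := by
      have h3 := mul_le_mul_of_nonneg_right key2 hEpos.le
      nlinarith [hEpos, hEpos']
    nlinarith [mul_le_mul_of_nonneg_left key3 (neg_nonneg.mpr h.le)]
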